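/- arXiv:1106.1954 — 2 statements merged into one kernel-verified Lean document; each statement's English description precedes it below -/
import Mathlib

section
/- Fix ω ∈ Ω, λ₁ ∈ ℝ, and N ∈ ℕ such that every entry of A^{(N)}(ω) is at least 1. Assume that at the point θ^N ω: (a) there exists a nonzero v₁ ∈ ℝ^k with lim_{n→∞}(1/n) log ‖v₁ A^{(n)}(θ^N ω)‖₁ = λ₁, and (b) for every w ∈ ℝ^k, limsup_{n→∞}(1/n) log ‖w A^{(n)}(θ^N ω)‖₁ ≤ λ₁. Then for every nonzero v ∈ ℝ^k with all coordinates nonnegative, the limit lim_{n→∞}(1/n) log ‖v A^{(n)}(ω)‖₁ exists and equals λ₁. -/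
open MeasureTheory Filter Topology

/-- The matrix cocycle: `matIter θ A n ω = A(ω)A(θω)⋯A(θ^{n-1}ω)` (with `matIter θ A 0 ω = 1`). -/
noncomputable def matIter {Ω : Type*} {k : ℕ} (θ : Ω → Ω)
    (A : Ω → Matrix (Fin k) (Fin k) ℝ) : ℕ → Ω → Matrix (Fin k) (Fin k) ℝ
  | 0, _ => 1
  | n + 1, ω => A ω * matIter θ A n (θ ω)

/-- The ℓ¹ norm of a row vector: `‖v‖₁ = Σᵢ |vᵢ|`. -/
noncomputable def l1norm {k : ℕ} (v : Fin k → ℝ) : ℝ := ∑ i, |v i|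

set_option linter.unusedVariables false
set_option linter.unusedTactic false

section helpers
variable {Ω : Type*} {k : ℕ} (θ : Ω → Ω) (A : Ω → Matrix (Fin k) (Fin k) ℝ)

lemma matIter_add (m n : ℕ) (ω : Ω) :
    matIter θ A (m + n) ω = matIter θ A m ω * matIter θ A n (θ^[m] ω) := by
  induction m generalizing ω with
  | zero => simp [matIter]
  | succ m ih =>
      have h : m + 1 + n = (m + n) + 1 := by ring
      rw [h]
      show A ω * matIter θ A (m + n) (θ ω)
        = (A ω * matIter θ A m (θ ω)) * matIter θ A n (θ^[m+1] ω)
      rw [ih, mul_assoc, Function.iterate_succ_apply]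

variable (h01 : ∀ ω i j, A ω i j = 0 ∨ A ω i j = 1)
include h01

lemma matIter_entry_nat (n : ℕ) : ∀ (ω : Ω) i j, ∃ m : ℕ, matIter θ A n ω i j = (m : ℝ) := by
  induction n with
  | zero =>
      intro ω i j
      refine ⟨if i = j then 1 else 0, ?_⟩
      show (1 : Matrix (Fin k) (Fin k) ℝ) i j = _
      rw [Matrix.one_apply]
      split <;> simp
  | succ n ih =>
      intro ω i j
      choose m hm using fun l => ih (θ ω) l j
      refine ⟨∑ l, (if A ω i l = 0 then 0 else m l), ?_⟩
      show (A ω * matIter θ A n (θ ω)) i j = _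
      rw [Matrix.mul_apply]
      push_cast
      refine Finset.sum_congr rfl fun l _ => ?_
      rcases h01 ω i l with h | h <;> simp [h, hm l]

lemma matIter_entry_nonneg (n : ℕ) (ω : Ω) (i j : Fin k) : 0 ≤ matIter θ A n ω i j := by
  obtain ⟨m, hm⟩ := matIter_entry_nat θ A h01 n ω i j
  rw [hm]; positivity

lemma matIter_entry_le (n : ℕ) (ω : Ω) (i j : Fin k) : matIter θ A n ω i j ≤ (k : ℝ) ^ n := by
  induction n generalizing ω i j with
  | zero =>
      show (1 : Matrix (Fin k) (Fin k) ℝ) i j ≤ 1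
      rw [Matrix.one_apply]; split <;> norm_num
  | succ n ih =>
      show (A ω * matIter θ A n (θ ω)) i j ≤ (k:ℝ)^(n+1)
      rw [Matrix.mul_apply]
      calc ∑ l, A ω i l * matIter θ A n (θ ω) l j
          ≤ ∑ _l : Fin k, 1 * (k:ℝ)^n := by
            refine Finset.sum_le_sum fun l _ => ?_
            have h1 : A ω i l ≤ 1 := by rcases h01 ω i l with h | h <;> simp [h]
            have h0 : 0 ≤ A ω i l := by rcases h01 ω i l with h | h <;> simp [h]
            exact mul_le_mul h1 (ih _ _ _) (matIter_entry_nonneg θ A h01 n (θ ω) l j) zero_le_one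
        _ = (k:ℝ)^(n+1) := by simp [pow_succ]; ring

omit h01 in
lemma l1norm_vecMul_nonneg (w : Fin k → ℝ) (M : Matrix (Fin k) (Fin k) ℝ)
    (hw : ∀ i, 0 ≤ w i) (hM : ∀ i j, 0 ≤ M i j) :
    l1norm (Matrix.vecMul w M) = ∑ j, ∑ i, w i * M i j := by
  unfold l1norm
  refine Finset.sum_congr rfl fun j _ => ?_
  have : Matrix.vecMul w M j = ∑ i, w i * M i j := by
    simp [Matrix.vecMul, dotProduct]
  rw [this, abs_of_nonneg]
  exact Finset.sum_nonneg fun i _ => mul_nonneg (hw i) (hM i j)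

omit h01 in
lemma l1norm_vecMul_le (w : Fin k → ℝ) (M : Matrix (Fin k) (Fin k) ℝ)
    (hM : ∀ i j, 0 ≤ M i j) :
    l1norm (Matrix.vecMul w M) ≤ ∑ j, ∑ i, |w i| * M i j := by
  unfold l1norm
  refine Finset.sum_le_sum fun j _ => ?_
  have : Matrix.vecMul w M j = ∑ i, w i * M i j := by
    simp [Matrix.vecMul, dotProduct]
  rw [this]
  refine (Finset.abs_sum_le_sum_abs _ _).trans (Finset.sum_le_sum fun i _ => ?_)
  rw [abs_mul, abs_of_nonneg (hM i j)]

end helpers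

/-- Fix `ω`, `λ₁ ∈ ℝ` and `N ∈ ℕ` such that every entry of `A^{(N)}(ω)` is
at least `1`.  Assume at `θ^N ω`: (a) there is a nonzero `v₁` with
`lim (1/n) log ‖v₁ A^{(n)}(θ^N ω)‖₁ = λ₁`, and (b) for every `w`,
`limsup (1/n) log ‖w A^{(n)}(θ^N ω)‖₁ ≤ λ₁`.  Then for every nonzero nonnegative `v`, the
limit `lim (1/n) log ‖v A^{(n)}(ω)‖₁` exists and equals `λ₁`. -/
theorem nonnegative_vector_attains_top_exponent
    {Ω : Type*} [MeasurableSpace Ω]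
    (ℙ : Measure Ω) [IsProbabilityMeasure ℙ]
    (θ : Ω → Ω) (hθ : MeasurePreserving θ ℙ ℙ) (hθinv : Function.Bijective θ)
    (k : ℕ) (hk : 2 ≤ k)
    (A : Ω → Matrix (Fin k) (Fin k) ℝ)
    (hAmeas : ∀ i j, Measurable fun ω => A ω i j)
    (h01 : ∀ ω i j, A ω i j = 0 ∨ A ω i j = 1)
    (ω : Ω) (lam1 : ℝ) (N : ℕ)
    (hN : ∀ i j, 1 ≤ matIter θ A N ω i j)
    (ha : ∃ v₁ : Fin k → ℝ, v₁ ≠ 0 ∧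
      Filter.Tendsto
        (fun n : ℕ => (n : ℝ)⁻¹ *
          Real.log (l1norm (Matrix.vecMul v₁ (matIter θ A n (θ^[N] ω)))))
        Filter.atTop (𝓝 lam1))
    (hb : ∀ w : Fin k → ℝ,
      Filter.limsup
        (fun n : ℕ => (n : ℝ)⁻¹ *
          Real.log (l1norm (Matrix.vecMul w (matIter θ A n (θ^[N] ω)))))
        Filter.atTop ≤ lam1) :
    ∀ v : Fin k → ℝ, v ≠ 0 → (∀ i, 0 ≤ v i) →
      Filter.Tendsto
        (fun n : ℕ => (n : ℝ)⁻¹ * Real.log (l1norm (Matrix.vecMul v (matIter θ A n ω))))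
        Filter.atTop (𝓝 lam1) := by
  obtain ⟨v₁, hv₁ne, hv₁lim⟩ := ha
  intro v hvne hvnn
  have hkpos : 0 < k := lt_of_lt_of_le two_pos hk
  haveI : Nonempty (Fin k) := ⟨⟨0, hkpos⟩⟩
  have hMnn : ∀ n i j, 0 ≤ matIter θ A n (θ^[N] ω) i j :=
    fun n i j => matIter_entry_nonneg θ A h01 n _ i j
  -- the sum of all entries of the cocycle at θ^N ω
  set S : ℕ → ℝ := fun n => ∑ j, ∑ i, matIter θ A n (θ^[N] ω) i j with hSdef
  have hSnat : ∀ n, ∃ m : ℕ, S n = (m : ℝ) := by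
    intro n
    choose m hm using fun (j i : Fin k) => matIter_entry_nat θ A h01 n (θ^[N] ω) i j
    refine ⟨∑ j, ∑ i, m j i, ?_⟩
    simp only [hSdef]
    push_cast
    exact Finset.sum_congr rfl fun j _ => Finset.sum_congr rfl fun i _ => hm j i
  have hSnn : ∀ n, 0 ≤ S n := fun n =>
    Finset.sum_nonneg fun j _ => Finset.sum_nonneg fun i _ => hMnn n i j
  -- the vector u = v ⬝ A^{(N)}(ω)
  set u : Fin k → ℝ := Matrix.vecMul v (matIter θ A N ω) with hudef
  set c : ℝ := ∑ i, v i with hcdef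
  have hc0 : 0 < c := by
    obtain ⟨i0, hi0⟩ := Function.ne_iff.mp hvne
    exact Finset.sum_pos' (fun i _ => hvnn i)
      ⟨i0, Finset.mem_univ _, lt_of_le_of_ne (hvnn i0) (Ne.symm hi0)⟩
  have hufloor : ∀ j, c ≤ u j := by
    intro j
    have h1 : u j = ∑ i, v i * matIter θ A N ω i j := by
      simp [hudef, Matrix.vecMul, dotProduct]
    rw [h1]
    calc c = ∑ i, v i * 1 := by simp [hcdef]
      _ ≤ ∑ i, v i * matIter θ A N ω i j :=
        Finset.sum_le_sum fun i _ => mul_le_mul_of_nonneg_left (hN i j) (hvnn i)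
  have hunn : ∀ j, 0 ≤ u j := fun j => hc0.le.trans (hufloor j)
  set U : ℝ := ∑ i, u i with hUdef
  have hU0 : 0 < U :=
    Finset.sum_pos (fun i _ => hc0.trans_le (hufloor i)) Finset.univ_nonempty
  have huU : ∀ i, u i ≤ U :=
    fun i => Finset.single_le_sum (fun j _ => hunn j) (Finset.mem_univ i)
  set V : ℝ := ∑ i, |v₁ i| with hVdef
  have hV0 : 0 < V := by
    obtain ⟨i0, hi0⟩ := Function.ne_iff.mp hv₁ne
    exact Finset.sum_pos' (fun i _ => abs_nonneg _)
      ⟨i0, Finset.mem_univ _, abs_pos.mpr hi0⟩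
  have hvV : ∀ i, |v₁ i| ≤ V :=
    fun i => Finset.single_le_sum (fun j _ => abs_nonneg (v₁ j)) (Finset.mem_univ i)
  -- key identity
  have hkey : ∀ n, Matrix.vecMul v (matIter θ A (n + N) ω)
      = Matrix.vecMul u (matIter θ A n (θ^[N] ω)) := by
    intro n
    rw [add_comm n N, matIter_add θ A N n ω, hudef, Matrix.vecMul_vecMul]
  -- bounds on the l1 norms
  have hXform : ∀ n, l1norm (Matrix.vecMul u (matIter θ A n (θ^[N] ω)))
      = ∑ j, ∑ i, u i * matIter θ A n (θ^[N] ω) i j :=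
    fun n => l1norm_vecMul_nonneg u _ hunn (hMnn n)
  have hXlb : ∀ n, c * S n ≤ l1norm (Matrix.vecMul u (matIter θ A n (θ^[N] ω))) := by
    intro n
    rw [hXform n, hSdef]
    simp only [Finset.mul_sum]
    refine Finset.sum_le_sum fun j _ => Finset.sum_le_sum fun i _ => ?_
    exact mul_le_mul_of_nonneg_right (hufloor i) (hMnn n i j)
  have hXub : ∀ n, l1norm (Matrix.vecMul u (matIter θ A n (θ^[N] ω))) ≤ U * S n := by
    intro n
    rw [hXform n, hSdef]
    simp only [Finset.mul_sum]
    refine Finset.sum_le_sum fun j _ => Finset.sum_le_sum fun i _ => ?_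
    exact mul_le_mul_of_nonneg_right (huU i) (hMnn n i j)
  have hxub : ∀ n, l1norm (Matrix.vecMul v₁ (matIter θ A n (θ^[N] ω))) ≤ V * S n := by
    intro n
    refine (l1norm_vecMul_le v₁ _ (hMnn n)).trans ?_
    rw [hSdef]
    simp only [Finset.mul_sum]
    refine Finset.sum_le_sum fun j _ => Finset.sum_le_sum fun i _ => ?_
    exact mul_le_mul_of_nonneg_right (hvV i) (hMnn n i j)
  have hxnn : ∀ n, 0 ≤ l1norm (Matrix.vecMul v₁ (matIter θ A n (θ^[N] ω))) :=
    fun n => Finset.sum_nonneg fun i _ => abs_nonneg _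
  by_cases hcase : ∀ n, S n ≠ 0
  · -- Case A : the cocycle never dies
    have hS1 : ∀ n, 1 ≤ S n := by
      intro n
      obtain ⟨m, hm⟩ := hSnat n
      have hm0 : m ≠ 0 := by
        rintro rfl
        exact hcase n (by simp [hm])
      rw [hm]
      exact_mod_cast Nat.one_le_iff_ne_zero.mpr hm0
    have hSpos : ∀ n, 0 < S n := fun n => zero_lt_one.trans_le (hS1 n)
    have hXpos : ∀ n, 0 < l1norm (Matrix.vecMul u (matIter θ A n (θ^[N] ω))) :=
      fun n => (mul_pos hc0 (hSpos n)).trans_le (hXlb n)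
    have hlogX : ∀ n, Real.log c + Real.log (S n)
        ≤ Real.log (l1norm (Matrix.vecMul u (matIter θ A n (θ^[N] ω)))) := by
      intro n
      rw [← Real.log_mul hc0.ne' (hSpos n).ne']
      exact Real.log_le_log (mul_pos hc0 (hSpos n)) (hXlb n)
    have hlogx : ∀ n, Real.log (l1norm (Matrix.vecMul v₁ (matIter θ A n (θ^[N] ω))))
        ≤ |Real.log V| + Real.log (S n) := by
      intro n
      rcases eq_or_lt_of_le (hxnn n) with h | h
      · rw [← h, Real.log_zero]
        have := Real.log_nonneg (hS1 n)
        positivity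
      · calc Real.log (l1norm (Matrix.vecMul v₁ (matIter θ A n (θ^[N] ω))))
            ≤ Real.log (V * S n) := Real.log_le_log h (hxub n)
          _ = Real.log V + Real.log (S n) := Real.log_mul hV0.ne' (hSpos n).ne'
          _ ≤ |Real.log V| + Real.log (S n) := by
              have := le_abs_self (Real.log V); linarith
    have hpt : ∀ n : ℕ, (n:ℝ)⁻¹ * (Real.log c - |Real.log V|)
        + (n:ℝ)⁻¹ * Real.log (l1norm (Matrix.vecMul v₁ (matIter θ A n (θ^[N] ω))))
        ≤ (n:ℝ)⁻¹ * Real.log (l1norm (Matrix.vecMul u (matIter θ A n (θ^[N] ω)))) := by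
      intro n
      have h1 : Real.log c - |Real.log V|
          + Real.log (l1norm (Matrix.vecMul v₁ (matIter θ A n (θ^[N] ω))))
          ≤ Real.log (l1norm (Matrix.vecMul u (matIter θ A n (θ^[N] ω)))) := by
        have := hlogx n; have := hlogX n; linarith
      have h2 : (0:ℝ) ≤ (n:ℝ)⁻¹ := by positivity
      calc (n:ℝ)⁻¹ * (Real.log c - |Real.log V|)
            + (n:ℝ)⁻¹ * Real.log (l1norm (Matrix.vecMul v₁ (matIter θ A n (θ^[N] ω))))
          = (n:ℝ)⁻¹ * (Real.log c - |Real.log V|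
            + Real.log (l1norm (Matrix.vecMul v₁ (matIter θ A n (θ^[N] ω))))) := by ring
        _ ≤ _ := mul_le_mul_of_nonneg_left h1 h2
    have hg : Tendsto (fun n : ℕ => (n:ℝ)⁻¹ * (Real.log c - |Real.log V|)
        + (n:ℝ)⁻¹ * Real.log (l1norm (Matrix.vecMul v₁ (matIter θ A n (θ^[N] ω)))))
        atTop (𝓝 lam1) := by
      have h0 : Tendsto (fun n : ℕ => (n:ℝ)⁻¹ * (Real.log c - |Real.log V|))
          atTop (𝓝 0) := by
        simpa using tendsto_inv_atTop_nhds_zero_nat.mul_const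
          (Real.log c - |Real.log V|)
      simpa using h0.add hv₁lim
    have hbdd : IsBoundedUnder (· ≤ ·) atTop
        (fun n : ℕ => (n:ℝ)⁻¹ * Real.log (l1norm (Matrix.vecMul u (matIter θ A n (θ^[N] ω))))) := by
      refine isBoundedUnder_of ⟨|Real.log U| + 3 * |Real.log k|, ?_⟩
      intro n
      rcases Nat.eq_zero_or_pos n with rfl | hn
      · simp; positivity
      · have hn1 : (1:ℝ) ≤ (n:ℝ) := by exact_mod_cast hn
        have hnR : (0:ℝ) < (n:ℝ) := lt_of_lt_of_le zero_lt_one hn1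
        have hSup : S n ≤ (k:ℝ) ^ (n + 2) := by
          rw [hSdef]
          calc (∑ j, ∑ i, matIter θ A n (θ^[N] ω) i j)
              ≤ ∑ _j : Fin k, ∑ _i : Fin k, (k:ℝ)^n :=
                Finset.sum_le_sum fun j _ => Finset.sum_le_sum fun i _ =>
                  matIter_entry_le θ A h01 n _ i j
            _ = (k:ℝ) ^ (n + 2) := by
                simp [Finset.sum_const, Finset.card_fin, nsmul_eq_mul, pow_succ]
                ring
        have hlogS : Real.log (S n) ≤ ((n:ℝ) + 2) * Real.log k := by
          calc Real.log (S n) ≤ Real.log ((k:ℝ)^(n+2)) :=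
                Real.log_le_log (hSpos n) hSup
            _ = ((n:ℝ) + 2) * Real.log k := by
                rw [Real.log_pow]; push_cast; ring
        have hlogXn : Real.log (l1norm (Matrix.vecMul u (matIter θ A n (θ^[N] ω))))
            ≤ Real.log U + ((n:ℝ) + 2) * Real.log k := by
          calc Real.log (l1norm (Matrix.vecMul u (matIter θ A n (θ^[N] ω))))
              ≤ Real.log (U * S n) := Real.log_le_log (hXpos n) (hXub n)
            _ = Real.log U + Real.log (S n) := Real.log_mul hU0.ne' (hSpos n).ne'
            _ ≤ Real.log U + ((n:ℝ) + 2) * Real.log k := by linarith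
        have hlogk : 0 ≤ Real.log k := Real.log_nonneg (by exact_mod_cast hkpos)
        have hinv1 : (n:ℝ)⁻¹ ≤ 1 := by
          exact inv_le_one_of_one_le₀ hn1
        have hinv0 : (0:ℝ) < (n:ℝ)⁻¹ := by positivity
        have hinvmul : (n:ℝ)⁻¹ * (n:ℝ) = 1 := inv_mul_cancel₀ hnR.ne'
        calc (n:ℝ)⁻¹ * Real.log (l1norm (Matrix.vecMul u (matIter θ A n (θ^[N] ω))))
            ≤ (n:ℝ)⁻¹ * (Real.log U + ((n:ℝ) + 2) * Real.log k) :=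
              mul_le_mul_of_nonneg_left hlogXn hinv0.le
          _ ≤ |Real.log U| + 3 * |Real.log k| := by
              have habsU : Real.log U ≤ |Real.log U| := le_abs_self _
              have habsk : Real.log k ≤ |Real.log k| := le_abs_self _
              have habsU0 : 0 ≤ |Real.log U| := abs_nonneg _
              nlinarith [mul_le_mul_of_nonneg_left habsU hinv0.le,
                mul_le_mul_of_nonneg_right hinv1 habsU0]
      done
    refine (Filter.tendsto_add_atTop_iff_nat N).mp ?_
    have ht : Tendsto
        (fun n : ℕ => (n:ℝ)⁻¹ * Real.log (l1norm (Matrix.vecMul u (matIter θ A n (θ^[N] ω)))))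
        atTop (𝓝 lam1) := by
      refine tendsto_order.2 ⟨?_, ?_⟩
      · intro b hb'
        filter_upwards [hg.eventually (eventually_gt_nhds hb')] with n hn
        exact hn.trans_le (hpt n)
      · intro b hb'
        exact Filter.eventually_lt_of_limsup_lt (lt_of_le_of_lt (hb u) hb') hbdd
    have hfrac : Tendsto (fun n : ℕ => (n:ℝ)/((n:ℝ) + N)) atTop (𝓝 1) :=
      tendsto_natCast_div_add_atTop (N:ℝ)
    have hprod : Tendsto (fun n : ℕ => ((n:ℝ)/((n:ℝ) + N)) *
        ((n:ℝ)⁻¹ * Real.log (l1norm (Matrix.vecMul u (matIter θ A n (θ^[N] ω))))))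
        atTop (𝓝 lam1) := by
      simpa using hfrac.mul ht
    refine hprod.congr' ?_
    filter_upwards [eventually_ge_atTop 1] with n hn
    have hn0 : (0:ℝ) < (n:ℝ) := by exact_mod_cast hn
    have hnN : (0:ℝ) < (n:ℝ) + N := by positivity
    rw [hkey n]
    push_cast
    field_simp
  · -- Case B : the cocycle dies
    push_neg at hcase
    obtain ⟨n₀, hn₀⟩ := hcase
    have hM0 : matIter θ A n₀ (θ^[N] ω) = 0 := by
      ext i j
      have h1 : ∀ j ∈ Finset.univ, (∑ i, matIter θ A n₀ (θ^[N] ω) i j) = 0 :=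
        (Finset.sum_eq_zero_iff_of_nonneg fun j _ =>
          Finset.sum_nonneg fun i _ => hMnn n₀ i j).mp hn₀
      exact (Finset.sum_eq_zero_iff_of_nonneg fun i _ => hMnn n₀ i j).mp
        (h1 j (Finset.mem_univ j)) i (Finset.mem_univ i)
    have hMz : ∀ n, n₀ ≤ n → matIter θ A n (θ^[N] ω) = 0 := by
      intro n hn
      have h1 : n = n₀ + (n - n₀) := by omega
      rw [h1, matIter_add, hM0, zero_mul]
    have h0lim : Tendsto
        (fun n : ℕ => (n:ℝ)⁻¹ * Real.log (l1norm (Matrix.vecMul v₁ (matIter θ A n (θ^[N] ω)))))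
        atTop (𝓝 0) := by
      refine Tendsto.congr' ?_ (tendsto_const_nhds : Tendsto (fun _ : ℕ => (0:ℝ)) atTop (𝓝 0))
      filter_upwards [eventually_ge_atTop n₀] with n hn
      rw [hMz n hn, Matrix.vecMul_zero]
      simp [l1norm]
    have hlam : lam1 = 0 := tendsto_nhds_unique hv₁lim h0lim
    rw [hlam]
    refine Tendsto.congr' ?_ (tendsto_const_nhds : Tendsto (fun _ : ℕ => (0:ℝ)) atTop (𝓝 0))
    filter_upwards [eventually_ge_atTop (n₀ + N)] with n hn
    symm
    have h1 : n = (n - N) + N := by omega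
    rw [h1, hkey (n - N), hMz (n - N) (by omega), Matrix.vecMul_zero]
    simp [l1norm]
end

section
/- Fix ω ∈ Ω, N ∈ ℕ such that every entry of A^{(N)}(ω) is at least 1, and v ∈ ℝ^k. Suppose the vector v·A^{(N)}(ω) has at least one coordinate ≤ 0 and at least one coordinate ≥ 0. Then ‖v⁺‖₁ ≤ k^N ‖v⁻‖₁ and ‖v⁻‖₁ ≤ k^N ‖v⁺‖₁, where v⁺ and v⁻ denote the coordinatewise positive and negative parts of v (so v = v⁺ − v⁻ with v⁺, v⁻ ≥ 0). -/
open MeasureTheory Filter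

lemma matIter_nonneg {Ω : Type*} {k : ℕ} (θ : Ω → Ω)
    (A : Ω → Matrix (Fin k) (Fin k) ℝ)
    (h01 : ∀ ω i j, A ω i j = 0 ∨ A ω i j = 1) :
    ∀ n ω i j, 0 ≤ matIter θ A n ω i j := by
  intro n
  induction n with
  | zero =>
    intro ω i j
    simp only [matIter, Matrix.one_apply]
    split <;> norm_num
  | succ n ih =>
    intro ω i j
    simp only [matIter, Matrix.mul_apply]
    refine Finset.sum_nonneg fun l _ => mul_nonneg ?_ (ih (θ ω) l j)
    rcases h01 ω i l with h | h <;> simp [h]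

lemma matIter_le {Ω : Type*} {k : ℕ} (θ : Ω → Ω)
    (A : Ω → Matrix (Fin k) (Fin k) ℝ)
    (h01 : ∀ ω i j, A ω i j = 0 ∨ A ω i j = 1) :
    ∀ n ω i j, matIter θ A n ω i j ≤ (k : ℝ) ^ n := by
  intro n
  induction n with
  | zero =>
    intro ω i j
    simp only [matIter, Matrix.one_apply, pow_zero]
    split <;> norm_num
  | succ n ih =>
    intro ω i j
    simp only [matIter, Matrix.mul_apply]
    calc ∑ l, A ω i l * matIter θ A n (θ ω) l j
        ≤ ∑ _l : Fin k, (k : ℝ) ^ n := by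
          refine Finset.sum_le_sum fun l _ => ?_
          have hA1 : A ω i l ≤ 1 := by rcases h01 ω i l with h | h <;> simp [h]
          have hA0 : 0 ≤ A ω i l := by rcases h01 ω i l with h | h <;> simp [h]
          calc A ω i l * matIter θ A n (θ ω) l j
              ≤ 1 * (k : ℝ) ^ n := by
                exact mul_le_mul hA1 (ih (θ ω) l j) (matIter_nonneg θ A h01 n (θ ω) l j)
                  zero_le_one
            _ = (k : ℝ) ^ n := one_mul _
      _ = (k : ℝ) ^ (n + 1) := by
          simp [Finset.sum_const, pow_succ, mul_comm]

lemma aux_ineq {k : ℕ} (m : Fin k → ℝ) (K : ℝ)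
    (hm1 : ∀ i, 1 ≤ m i) (hmK : ∀ i, m i ≤ K)
    (v : Fin k → ℝ) (h : ∑ i, v i * m i ≤ 0) :
    ∑ i, max (v i) 0 ≤ K * ∑ i, max (-v i) 0 := by
  have h1 : ∑ i, max (v i) 0 * m i ≤ ∑ i, max (-v i) 0 * m i := by
    have heq : ∀ i : Fin k, v i * m i = max (v i) 0 * m i - max (-v i) 0 * m i := by
      intro i
      rw [← sub_mul, max_zero_sub_max_neg_zero_eq_self]
    rw [show (∑ i, v i * m i) = ∑ i, (max (v i) 0 * m i - max (-v i) 0 * m i) from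
      Finset.sum_congr rfl fun i _ => heq i, Finset.sum_sub_distrib] at h
    linarith
  calc ∑ i, max (v i) 0 ≤ ∑ i, max (v i) 0 * m i := by
        refine Finset.sum_le_sum fun i _ => ?_
        exact le_mul_of_one_le_right (le_max_right _ _) (hm1 i)
    _ ≤ ∑ i, max (-v i) 0 * m i := h1
    _ ≤ ∑ i, max (-v i) 0 * K := by
        refine Finset.sum_le_sum fun i _ => ?_
        exact mul_le_mul_of_nonneg_left (hmK i) (le_max_right _ _)
    _ = K * ∑ i, max (-v i) 0 := by rw [← Finset.sum_mul, mul_comm]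

/-- Fix `ω`, `N` with all entries of `A^{(N)}(ω)` at least `1`, and
`v ∈ ℝ^k`.  If `v·A^{(N)}(ω)` has a coordinate `≤ 0` and a coordinate `≥ 0`, then
`‖v⁺‖₁ ≤ k^N ‖v⁻‖₁` and `‖v⁻‖₁ ≤ k^N ‖v⁻‖₁`, where `v⁺ᵢ = max(vᵢ,0)` and
`v⁻ᵢ = max(-vᵢ,0)`. -/
theorem positive_negative_parts_comparable
    {Ω : Type*} [MeasurableSpace Ω]
    (ℙ : Measure Ω) [IsProbabilityMeasure ℙ]
    (θ : Ω → Ω) (hθ : MeasurePreserving θ ℙ ℙ) (hθinv : Function.Bijective θ)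
    (k : ℕ) (hk : 2 ≤ k)
    (A : Ω → Matrix (Fin k) (Fin k) ℝ)
    (hAmeas : ∀ i j, Measurable fun ω => A ω i j)
    (h01 : ∀ ω i j, A ω i j = 0 ∨ A ω i j = 1)
    (ω : Ω) (N : ℕ)
    (hN : ∀ i j, 1 ≤ matIter θ A N ω i j)
    (v : Fin k → ℝ)
    (hle : ∃ i, Matrix.vecMul v (matIter θ A N ω) i ≤ 0)
    (hge : ∃ j, 0 ≤ Matrix.vecMul v (matIter θ A N ω) j) :
    (∑ i, max (v i) 0) ≤ (k : ℝ) ^ N * ∑ i, max (-v i) 0 ∧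
    (∑ i, max (-v i) 0) ≤ (k : ℝ) ^ N * ∑ i, max (v i) 0 := by
  obtain ⟨j0, hj0⟩ := hle
  obtain ⟨j1, hj1⟩ := hge
  have hvm : ∀ j, Matrix.vecMul v (matIter θ A N ω) j = ∑ i, v i * matIter θ A N ω i j := by
    intro j
    simp [Matrix.vecMul, dotProduct]
  constructor
  · refine aux_ineq (fun i => matIter θ A N ω i j0) ((k : ℝ) ^ N)
      (fun i => hN i j0) (fun i => matIter_le θ A h01 N ω i j0) v ?_
    rw [← hvm]; exact hj0
  · have := aux_ineq (fun i => matIter θ A N ω i j1) ((k : ℝ) ^ N)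
      (fun i => hN i j1) (fun i => matIter_le θ A h01 N ω i j1) (fun i => -v i) ?_
    · simpa using this
    · simp only [neg_mul]
      rw [Finset.sum_neg_distrib, ← hvm]
      linarith
end
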